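/- Let (A, W, X, Y, Z) be random variables, let h* : 𝒜 × 𝒲 × 𝒳 → ℝ satisfy E[Y − h*(A, W, X) | A, X, Z] = 0 P_{A,X,Z}-almost surely, and let k : (𝒜 × 𝒳 × 𝒵)² → ℝ be a bounded measurable kernel. Then for every h with the relevant expectations defined, R_k(h) = d_k²(h*, h), where R_k(h) = E[(Y − h(A,W,X))(Y' − h(A',W',X')) k((A,X,Z),(A',X',Z'))] and d_k²(h, h') = E[(h(A,W,X) − h'(A,W,X))(h(A',W',X') − h'(A',W',X')) k((A,X,Z),(A',X',Z'))], with (A', W', X', Y', Z') an independent copy of (A, W, X, Y, Z). -/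

import Mathlib

open MeasureTheory Real Filter

noncomputable section

/-- Sign associated to a Boolean Rademacher coordinate. -/
def sgn (b : Bool) : ℝ := if b then 1 else -1

/-- Empirical Rademacher complexity of a class `G` on the sample `S`:
`R_S(G) = E_ε sup_{g ∈ G} (1/n) Σ_i ε_i g(S i)` with `ε` uniform on `{-1,1}^n`. -/
def empRad {X : Type*} {n : ℕ} (G : Set (X → ℝ)) (S : Fin n → X) : ℝ :=
  (∑ ε : Fin n → Bool,
      sSup ((fun g => (n : ℝ)⁻¹ * ∑ i, sgn (ε i) * g (S i)) '' G)) / 2 ^ n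

/-- Expected Rademacher complexity `R_m(G)` for an i.i.d. sample of size `m` from `μ`. -/
def expRad {X : Type*} [MeasurableSpace X] (μ : Measure X) (G : Set (X → ℝ)) (m : ℕ) : ℝ :=
  ∫ S : Fin m → X, empRad G S ∂(Measure.pi fun _ : Fin m => μ)

/-- The sample `S` with its `i`-th point removed. -/
def loo {X : Type*} {n : ℕ} (S : Fin n → X) (i : Fin n) : Fin (n - 1) → X :=
  fun j => if (j : ℕ) < (i : ℕ) then S ⟨j, by have := j.isLt; omega⟩
           else S ⟨(j : ℕ) + 1, by have := j.isLt; omega⟩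

/-- `R̂_{n-1,S}(G) = (1/n) Σ_i R_{S_{-i}}(G)`. -/
def avgLooRad {X : Type*} {n : ℕ} (G : Set (X → ℝ)) (S : Fin n → X) : ℝ :=
  (n : ℝ)⁻¹ * ∑ i : Fin n, empRad G (loo S i)

/-- `F₁ = {g | ∃ f ∈ F, x', g(x) = f(x', x) for all x}`. -/
def classF1 {X : Type*} (F : Set (X → X → ℝ)) : Set (X → ℝ) :=
  {g | ∃ f ∈ F, ∃ x' : X, ∀ x, g x = f x' x}

/-- `F₂ = {g | ∃ f ∈ F, x', g(x) = f(x, x') for all x}`. -/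
def classF2 {X : Type*} (F : Set (X → X → ℝ)) : Set (X → ℝ) :=
  {g | ∃ f ∈ F, ∃ x' : X, ∀ x, g x = f x x'}

/-- Pointwise class `F_{1,x} = {g | ∃ f ∈ F, g(x') = f(x, x') for all x'}`. -/
def classF1x {X : Type*} (F : Set (X → X → ℝ)) (x : X) : Set (X → ℝ) :=
  {g | ∃ f ∈ F, ∀ x', g x' = f x x'}

/-- Pointwise class `F_{2,x} = {g | ∃ f ∈ F, g(x') = f(x', x) for all x'}`. -/
def classF2x {X : Type*} (F : Set (X → X → ℝ)) (x : X) : Set (X → ℝ) :=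
  {g | ∃ f ∈ F, ∀ x', g x' = f x' x}

/-- U-statistic `Ê_S f = (1/(n(n-1))) Σ_{i ≠ j} f(x_i, x_j)`. -/
def ustat {X : Type*} {n : ℕ} (f : X → X → ℝ) (S : Fin n → X) : ℝ :=
  ((n : ℝ) * ((n : ℝ) - 1))⁻¹ * ∑ i, ∑ j, if i ≠ j then f (S i) (S j) else 0

/-- `E_{X,X'} f(X,X')` under two independent copies of `X ~ μ`. -/
def pairExp {X : Type*} [MeasurableSpace X] (μ : Measure X) (f : X → X → ℝ) : ℝ :=
  ∫ p : X × X, f p.1 p.2 ∂(μ.prod μ)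

/-- Core lemma: if `E[f | σ(T)] = 0` a.s. then `∫ f ⬝ (g ∘ T) = 0` for bounded measurable `g`. -/
lemma core_zero {Ω β : Type*} [mΩ : MeasurableSpace Ω] [MeasurableSpace β]
    (μ : Measure Ω) [IsProbabilityMeasure μ] (T : Ω → β) (hT : Measurable T)
    (f : Ω → ℝ) (hf : Integrable f μ)
    (hcond : μ[f | MeasurableSpace.comap T inferInstance] =ᵐ[μ] 0)
    (g : β → ℝ) (hg : Measurable g) (C : ℝ) (hgC : ∀ b, |g b| ≤ C) :
    ∫ ω, f ω * g (T ω) ∂μ = 0 := by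
  set m := MeasurableSpace.comap T inferInstance with hm_def
  have hm : m ≤ mΩ := hT.comap_le
  have hTm : Measurable[m] T := fun s hs => ⟨s, hs, rfl⟩
  have hgT : StronglyMeasurable[m] (fun ω => g (T ω)) := (hg.comp hTm).stronglyMeasurable
  have hint : Integrable (fun ω => g (T ω) * f ω) μ :=
    hf.bdd_mul (hg.comp hT).aestronglyMeasurable
      (Filter.Eventually.of_forall fun ω => by rw [Real.norm_eq_abs]; exact hgC _)
  have h1 : μ[(fun ω => g (T ω)) * f | m] =ᵐ[μ] (fun ω => g (T ω)) * μ[f | m] :=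
    condExp_mul_of_stronglyMeasurable_left hgT hint hf
  have h2 : (fun ω => g (T ω)) * μ[f | m] =ᵐ[μ] (fun _ => (0 : ℝ)) :=
    hcond.mono fun ω hω => by simp [hω]
  calc ∫ ω, f ω * g (T ω) ∂μ = ∫ ω, g (T ω) * f ω ∂μ := by simp [mul_comm]
    _ = ∫ ω, (μ[(fun ω => g (T ω)) * f | m]) ω ∂μ :=
        (integral_condExp (f := (fun ω => g (T ω)) * f) hm).symm
    _ = ∫ _ω, (0 : ℝ) ∂μ := integral_congr_ae (h1.trans h2)
    _ = 0 := integral_zero _ _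

/-- if `E[Y − h*(A,W,X) | A,X,Z] = 0` a.s. then, for all `h` with the
relevant expectations defined, `R_k(h) = d_k²(h*, h)`, where the independent copy
`(A',W',X',Y',Z')` is realised as the second coordinate of the product space `Ω × Ω`. -/
theorem stmt14 {Ω A W Xt Z : Type*}
    [MeasurableSpace Ω] [MeasurableSpace A] [MeasurableSpace W]
    [MeasurableSpace Xt] [MeasurableSpace Z]
    (μ : Measure Ω) [IsProbabilityMeasure μ]
    (Av : Ω → A) (Wv : Ω → W) (Xv : Ω → Xt) (Yv : Ω → ℝ) (Zv : Ω → Z)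
    (hAv : Measurable Av) (hWv : Measurable Wv) (hXv : Measurable Xv)
    (hYv : Measurable Yv) (hZv : Measurable Zv)
    (hstar h : A → W → Xt → ℝ)
    (k : A × Xt × Z → A × Xt × Z → ℝ) (Mk : ℝ)
    (hkmeas : Measurable (Function.uncurry k)) (hkbd : ∀ p q, |k p q| ≤ Mk)
    (hmeas_h : Measurable fun ω => h (Av ω) (Wv ω) (Xv ω))
    (hmeas_hstar : Measurable fun ω => hstar (Av ω) (Wv ω) (Xv ω))
    (hY2 : MemLp Yv 2 μ)
    (hh2 : MemLp (fun ω => h (Av ω) (Wv ω) (Xv ω)) 2 μ)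
    (hs2 : MemLp (fun ω => hstar (Av ω) (Wv ω) (Xv ω)) 2 μ)
    (hmom : μ[(fun ω => Yv ω - hstar (Av ω) (Wv ω) (Xv ω)) |
        MeasurableSpace.comap (fun ω => (Av ω, Xv ω, Zv ω)) inferInstance] =ᵐ[μ] 0) :
    (∫ p : Ω × Ω,
        (Yv p.1 - h (Av p.1) (Wv p.1) (Xv p.1)) *
          (Yv p.2 - h (Av p.2) (Wv p.2) (Xv p.2)) *
          k (Av p.1, Xv p.1, Zv p.1) (Av p.2, Xv p.2, Zv p.2) ∂(μ.prod μ)) =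
      ∫ p : Ω × Ω,
        (hstar (Av p.1) (Wv p.1) (Xv p.1) - h (Av p.1) (Wv p.1) (Xv p.1)) *
          (hstar (Av p.2) (Wv p.2) (Xv p.2) - h (Av p.2) (Wv p.2) (Xv p.2)) *
          k (Av p.1, Xv p.1, Zv p.1) (Av p.2, Xv p.2, Zv p.2) ∂(μ.prod μ) := by
  set T : Ω → A × Xt × Z := fun ω => (Av ω, Xv ω, Zv ω) with hT_def
  have hT : Measurable T := hAv.prodMk (hXv.prodMk hZv)
  set u : Ω → ℝ := fun ω => Yv ω - hstar (Av ω) (Wv ω) (Xv ω) with hu_def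
  set v : Ω → ℝ := fun ω => hstar (Av ω) (Wv ω) (Xv ω) - h (Av ω) (Wv ω) (Xv ω) with hv_def
  have hum : Measurable u := hYv.sub hmeas_hstar
  have hvm : Measurable v := hmeas_hstar.sub hmeas_h
  have hui : Integrable u μ := (hY2.sub hs2).integrable one_le_two
  have hvi : Integrable v μ := (hs2.sub hh2).integrable one_le_two
  have hΩ : Nonempty Ω := by
    by_contra hn
    rw [not_nonempty_iff] at hn
    have h1 := measure_univ (μ := μ)
    rw [Set.univ_eq_empty_iff.mpr hn, measure_empty] at h1
    exact zero_ne_one h1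
  obtain ⟨ω0⟩ := hΩ
  have hMk : 0 ≤ Mk := (abs_nonneg _).trans (hkbd (T ω0) (T ω0))
  -- integrability of all the product terms
  have key_int : ∀ (f g : Ω → ℝ), Measurable f → Measurable g →
      Integrable f μ → Integrable g μ →
      Integrable (fun p : Ω × Ω => f p.1 * g p.2 * k (T p.1) (T p.2)) (μ.prod μ) := by
    intro f g hfm hgm hfi hgi
    have hmeasp : AEStronglyMeasurable
        (fun p : Ω × Ω => f p.1 * g p.2 * k (T p.1) (T p.2)) (μ.prod μ) :=
      (((hfm.comp measurable_fst).mul (hgm.comp measurable_snd)).mul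
        (hkmeas.comp ((hT.comp measurable_fst).prodMk
          (hT.comp measurable_snd)))).aestronglyMeasurable
    have hdom : Integrable (fun p : Ω × Ω => |f p.1| * |g p.2| * Mk) (μ.prod μ) :=
      (hfi.abs.mul_prod hgi.abs).mul_const Mk
    refine hdom.mono' hmeasp (Filter.Eventually.of_forall fun p => ?_)
    rw [Real.norm_eq_abs, abs_mul, abs_mul]
    exact mul_le_mul_of_nonneg_left (hkbd _ _) (mul_nonneg (abs_nonneg _) (abs_nonneg _))
  -- terms with `u` in the first slot vanish
  have zero1 : ∀ (w : Ω → ℝ), Measurable w → Integrable w μ →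
      ∫ p : Ω × Ω, u p.1 * w p.2 * k (T p.1) (T p.2) ∂(μ.prod μ) = 0 := by
    intro w hwm hwi
    rw [integral_prod_symm _ (key_int u w hum hwm hui hwi)]
    have hinner : ∀ y : Ω, ∫ x, u x * w y * k (T x) (T y) ∂μ = 0 := by
      intro y
      have hzero : ∫ x, u x * (w y * k (T x) (T y)) ∂μ = 0 :=
        core_zero μ T hT u hui hmom (fun b => w y * k b (T y))
          (measurable_const.mul (hkmeas.comp (measurable_id.prodMk measurable_const)))
          (|w y| * Mk)
          (fun b => by
            rw [abs_mul]
            exact mul_le_mul_of_nonneg_left (hkbd _ _) (abs_nonneg _))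
      calc ∫ x, u x * w y * k (T x) (T y) ∂μ
          = ∫ x, u x * (w y * k (T x) (T y)) ∂μ := by simp only [mul_assoc]
        _ = 0 := hzero
    simp only [hinner, integral_zero]
  -- terms with `u` in the second slot vanish
  have zero2 : ∀ (w : Ω → ℝ), Measurable w → Integrable w μ →
      ∫ p : Ω × Ω, w p.1 * u p.2 * k (T p.1) (T p.2) ∂(μ.prod μ) = 0 := by
    intro w hwm hwi
    rw [integral_prod _ (key_int w u hwm hum hwi hui)]
    have hinner : ∀ x : Ω, ∫ y, w x * u y * k (T x) (T y) ∂μ = 0 := by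
      intro x
      have hzero : ∫ y, u y * (w x * k (T x) (T y)) ∂μ = 0 :=
        core_zero μ T hT u hui hmom (fun b => w x * k (T x) b)
          (measurable_const.mul (hkmeas.comp (measurable_const.prodMk measurable_id)))
          (|w x| * Mk)
          (fun b => by
            rw [abs_mul]
            exact mul_le_mul_of_nonneg_left (hkbd _ _) (abs_nonneg _))
      calc ∫ y, w x * u y * k (T x) (T y) ∂μ
          = ∫ y, u y * (w x * k (T x) (T y)) ∂μ := by
            congr 1; funext y; ring
        _ = 0 := hzero
    simp only [hinner, integral_zero]
  -- expand and conclude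
  calc (∫ p : Ω × Ω,
        (Yv p.1 - h (Av p.1) (Wv p.1) (Xv p.1)) *
          (Yv p.2 - h (Av p.2) (Wv p.2) (Xv p.2)) *
          k (Av p.1, Xv p.1, Zv p.1) (Av p.2, Xv p.2, Zv p.2) ∂(μ.prod μ))
      = ∫ p : Ω × Ω,
          (u p.1 * u p.2 * k (T p.1) (T p.2) + u p.1 * v p.2 * k (T p.1) (T p.2)) +
          (v p.1 * u p.2 * k (T p.1) (T p.2) + v p.1 * v p.2 * k (T p.1) (T p.2))
            ∂(μ.prod μ) := by
        congr 1; funext p; simp only [hu_def, hv_def, hT_def]; ring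
    _ = ((∫ p : Ω × Ω, u p.1 * u p.2 * k (T p.1) (T p.2) ∂(μ.prod μ)) +
          ∫ p : Ω × Ω, u p.1 * v p.2 * k (T p.1) (T p.2) ∂(μ.prod μ)) +
        ((∫ p : Ω × Ω, v p.1 * u p.2 * k (T p.1) (T p.2) ∂(μ.prod μ)) +
          ∫ p : Ω × Ω, v p.1 * v p.2 * k (T p.1) (T p.2) ∂(μ.prod μ)) := by
        have hA := key_int u u hum hum hui hui
        have hB := key_int u v hum hvm hui hvi
        have hC := key_int v u hvm hum hvi hui
        have hD := key_int v v hvm hvm hvi hvi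
        have hAB : Integrable (fun p : Ω × Ω =>
            u p.1 * u p.2 * k (T p.1) (T p.2) + u p.1 * v p.2 * k (T p.1) (T p.2))
            (μ.prod μ) := hA.add hB
        have hCD : Integrable (fun p : Ω × Ω =>
            v p.1 * u p.2 * k (T p.1) (T p.2) + v p.1 * v p.2 * k (T p.1) (T p.2))
            (μ.prod μ) := hC.add hD
        rw [integral_add hAB hCD, integral_add hA hB, integral_add hC hD]
    _ = ∫ p : Ω × Ω, v p.1 * v p.2 * k (T p.1) (T p.2) ∂(μ.prod μ) := by
        rw [zero1 u hum hui, zero1 v hvm hvi, zero2 v hvm hvi]; ring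
    _ = _ := rfl

end
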